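/- Let n ≥ 2, p > 0, K ∈ K_o^n, and let f : S^{n-1} → (0,∞) be continuous. For sufficiently small δ > 0 and t ∈ (−δ, δ) define h_t(v) = (h_K(v)^p + t f(v)^p)^{1/p}. Then for every u ∈ S^{n-1} for which there is a unique v ∈ S^{n-1} satisfying ⟨ρ_K(u) u, v⟩ = h_K(v), one has lim_{t→0} (ρ_{[h_t]}(u) − ρ_K(u))/t = f(v)^p ρ_K(u) / (p h_K(v)^p). -/

import Mathlib

open MeasureTheory Metric Set Filter
open scoped RealInnerProductSpace ENNReal Pointwise Topology

/-- The support function of a set `K`. -/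
noncomputable def supportFn {n : ℕ} (K : Set (EuclideanSpace ℝ (Fin n)))
    (v : EuclideanSpace ℝ (Fin n)) : ℝ :=
  sSup ((fun y => ⟪y, v⟫) '' K)

/-- The radial function of a set `K` at `u`. -/
noncomputable def radialFn {n : ℕ} (K : Set (EuclideanSpace ℝ (Fin n)))
    (u : EuclideanSpace ℝ (Fin n)) : ℝ :=
  sSup {l : ℝ | 0 ≤ l ∧ l • u ∈ K}

/-- The Wulff shape `[f] = ⋂_{v ∈ Sⁿ⁻¹} {x : ⟨x,v⟩ ≤ f v}`. -/
def wulff (n : ℕ) (f : EuclideanSpace ℝ (Fin n) → ℝ) : Set (EuclideanSpace ℝ (Fin n)) :=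
  ⋂ v ∈ sphere (0 : EuclideanSpace ℝ (Fin n)) 1, {x | ⟪x, v⟫ ≤ f v}

lemma rpow_deriv_lip (q lo hi : ℝ) (hlo : 0 < lo) :
    ∃ L > 0, ∀ y ∈ Icc lo hi, ∀ z ∈ Icc lo hi,
      |q * y ^ (q - 1) - q * z ^ (q - 1)| ≤ L * |y - z| := by
  set B : ℝ := max (lo ^ (q - 2)) (hi ^ (q - 2)) with hB
  refine ⟨|q| * |q - 1| * B + 1, by positivity, fun y hy z hz => ?_⟩
  have hbound : ∀ x ∈ Icc lo hi, ‖q * ((q-1) * x ^ (q - 1 - 1))‖ ≤ |q| * |q - 1| * B + 1 := by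
    intro x hx
    have hx0 : 0 < x := lt_of_lt_of_le hlo hx.1
    have hxb : x ^ (q - 2) ≤ B := by
      rcases le_or_gt 0 (q - 2) with h | h
      · exact le_max_of_le_right (Real.rpow_le_rpow hx0.le hx.2 h)
      · exact le_max_of_le_left (Real.rpow_le_rpow_of_nonpos hlo hx.1 h.le)
    have hx2 : x ^ (q - 1 - 1) = x ^ (q - 2) := by ring_nf
    rw [hx2, Real.norm_eq_abs, abs_mul, abs_mul, abs_of_nonneg (Real.rpow_nonneg hx0.le _)]
    have h1 : |q| * (|q - 1| * x ^ (q - 2)) ≤ |q| * |q - 1| * B := by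
      rw [← mul_assoc]
      exact mul_le_mul_of_nonneg_left hxb (by positivity)
    linarith
  have hderiv : ∀ x ∈ Icc lo hi, HasDerivWithinAt (fun x : ℝ => q * x ^ (q - 1))
      (q * ((q-1) * x ^ (q - 1 - 1))) (Icc lo hi) x := by
    intro x hx
    have hx0 : x ≠ 0 := (lt_of_lt_of_le hlo hx.1).ne'
    exact (((Real.hasDerivAt_rpow_const (Or.inl hx0)).const_mul q).hasDerivWithinAt)
  have := (convex_Icc lo hi).norm_image_sub_le_of_norm_hasDerivWithin_le hderiv hbound hz hy
  simpa [Real.norm_eq_abs] using this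

lemma rpow_quad (q lo hi : ℝ) (hlo : 0 < lo) :
    ∃ C > 0, ∀ x ∈ Icc lo hi, ∀ s : ℝ, x + s ∈ Icc lo hi →
      |(x + s) ^ q - x ^ q - q * x ^ (q - 1) * s| ≤ C * s ^ 2 := by
  obtain ⟨L, hL, hlip⟩ := rpow_deriv_lip q lo hi hlo
  refine ⟨L, hL, fun x hx s hxs => ?_⟩
  have hmem : ∀ s' ∈ uIcc (0:ℝ) s, x + s' ∈ Icc lo hi := by
    intro s' hs'
    rw [uIcc_eq_union] at hs'
    rcases hs' with h | h
    · exact ⟨le_trans hx.1 (by linarith [h.1]), le_trans (by linarith [h.2]) hxs.2⟩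
    · exact ⟨le_trans hxs.1 (by linarith [h.1]), le_trans (by linarith [h.2]) hx.2⟩
  set φ : ℝ → ℝ := fun s' => (x + s') ^ q - q * x ^ (q - 1) * s' with hφ
  have hderiv : ∀ s' ∈ uIcc (0:ℝ) s,
      HasDerivWithinAt φ (q * (x + s') ^ (q - 1) - q * x ^ (q - 1)) (uIcc (0:ℝ) s) s' := by
    intro s' hs'
    have hne : x + s' ≠ 0 := (lt_of_lt_of_le hlo (hmem s' hs').1).ne'
    have h1 : HasDerivAt (fun y : ℝ => (x + y) ^ q) (1 * q * (x + s') ^ (q - 1)) s' :=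
      HasDerivAt.rpow_const ((hasDerivAt_id s').const_add x) (Or.inl hne)
    have h2 : HasDerivAt (fun y : ℝ => q * x ^ (q - 1) * y) (q * x ^ (q - 1) * 1) s' :=
      (hasDerivAt_id s').const_mul _
    have := (h1.sub h2).hasDerivWithinAt (s := uIcc (0:ℝ) s)
    exact this.congr_deriv (by ring)
  have hbd : ∀ s' ∈ uIcc (0:ℝ) s,
      ‖q * (x + s') ^ (q - 1) - q * x ^ (q - 1)‖ ≤ L * |s| := by
    intro s' hs'
    have h1 := hlip (x + s') (hmem s' hs') x hx
    have h2 : |x + s' - x| = |s'| := by ring_nf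
    have h3 : |s'| ≤ |s| := by
      rw [uIcc_eq_union] at hs'
      rcases hs' with h | h
      · rw [abs_le]
        exact ⟨by linarith [h.1, abs_nonneg s], by linarith [h.2, le_abs_self s]⟩
      · rw [abs_le]
        exact ⟨by linarith [h.1, neg_abs_le s], by linarith [h.2, abs_nonneg s]⟩
    rw [Real.norm_eq_abs]
    calc |q * (x + s') ^ (q - 1) - q * x ^ (q - 1)| ≤ L * |x + s' - x| := h1
      _ = L * |s'| := by rw [h2]
      _ ≤ L * |s| := mul_le_mul_of_nonneg_left h3 hL.le
  have := (convex_uIcc (0:ℝ) s).norm_image_sub_le_of_norm_hasDerivWithin_le hderiv hbd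
    (left_mem_uIcc) (right_mem_uIcc)
  have hφs : φ s - φ 0 = (x + s) ^ q - x ^ q - q * x ^ (q - 1) * s := by
    simp [hφ]; ring
  rw [Real.norm_eq_abs, hφs, Real.norm_eq_abs, sub_zero] at this
  calc |(x + s) ^ q - x ^ q - q * x ^ (q - 1) * s| ≤ L * |s| * |s| := this
    _ = L * s ^ 2 := by rw [mul_assoc, ← abs_mul, ← sq, abs_sq]

lemma le_supportFn {n : ℕ} {K : Set (EuclideanSpace ℝ (Fin n))} (hK : IsCompact K)
    {y : EuclideanSpace ℝ (Fin n)} (hy : y ∈ K) (v : EuclideanSpace ℝ (Fin n)) :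
    ⟪y, v⟫ ≤ supportFn K v :=
  le_csSup ((hK.image (continuous_id.inner continuous_const)).bddAbove) ⟨y, hy, rfl⟩

lemma supportFn_le {n : ℕ} {K : Set (EuclideanSpace ℝ (Fin n))} (hne : K.Nonempty)
    {v : EuclideanSpace ℝ (Fin n)} {B : ℝ} (h : ∀ y ∈ K, ⟪y, v⟫ ≤ B) :
    supportFn K v ≤ B :=
  csSup_le (hne.image _) (by rintro x ⟨y, hy, rfl⟩; exact h y hy)

lemma mem_wulff {n : ℕ} {g : EuclideanSpace ℝ (Fin n) → ℝ} {x : EuclideanSpace ℝ (Fin n)} :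
    x ∈ wulff n g ↔ ∀ w ∈ sphere (0 : EuclideanSpace ℝ (Fin n)) 1, ⟪x, w⟫ ≤ g w := by
  simp [wulff]

lemma supportFn_continuous {n : ℕ} {K : Set (EuclideanSpace ℝ (Fin n))} (hK : IsCompact K)
    (hne : K.Nonempty) {R : ℝ} (hR : ∀ y ∈ K, ‖y‖ ≤ R) : Continuous (supportFn K) := by
  have key : ∀ v w : EuclideanSpace ℝ (Fin n), supportFn K v ≤ supportFn K w + R * ‖v - w‖ := by
    intro v w
    refine supportFn_le hne fun y hy => ?_
    have h1 : ⟪y, v⟫ = ⟪y, w⟫ + ⟪y, v - w⟫ := by rw [← inner_add_right]; congr 1; abel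
    have h2 : ⟪y, v - w⟫ ≤ ‖y‖ * ‖v - w‖ := real_inner_le_norm _ _
    have h3 : ‖y‖ * ‖v - w‖ ≤ R * ‖v - w‖ :=
      mul_le_mul_of_nonneg_right (hR y hy) (norm_nonneg _)
    have h4 := le_supportFn hK hy w
    linarith
  have hR0 : 0 ≤ R := le_trans (norm_nonneg _) (hR _ hne.choose_spec)
  refine LipschitzWith.continuous (K := ⟨R, hR0⟩) ?_
  refine LipschitzWith.of_dist_le_mul fun v w => ?_
  rw [Real.dist_eq, dist_eq_norm]
  rw [abs_sub_le_iff]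
  constructor
  · have := key v w; change _ ≤ R * _; linarith
  · have := key w v; rw [norm_sub_rev] at this; change _ ≤ R * _; linarith


set_option maxHeartbeats 2000000 in
theorem radialFn_wulff_derivative (n : ℕ) (hn : 2 ≤ n) (p : ℝ) (hp : 0 < p)
    (K : Set (EuclideanSpace ℝ (Fin n)))
    (hK : IsCompact K) (hKconv : Convex ℝ K) (hKo : (0 : EuclideanSpace ℝ (Fin n)) ∈ interior K)
    (f : EuclideanSpace ℝ (Fin n) → ℝ)
    (hf : ContinuousOn f (sphere (0 : EuclideanSpace ℝ (Fin n)) 1))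
    (hfpos : ∀ v ∈ sphere (0 : EuclideanSpace ℝ (Fin n)) 1, 0 < f v)
    (u : EuclideanSpace ℝ (Fin n)) (hu : u ∈ sphere (0 : EuclideanSpace ℝ (Fin n)) 1)
    (v : EuclideanSpace ℝ (Fin n)) (hv : v ∈ sphere (0 : EuclideanSpace ℝ (Fin n)) 1)
    (hvK : ⟪radialFn K u • u, v⟫ = supportFn K v)
    (hvuniq : ∀ w ∈ sphere (0 : EuclideanSpace ℝ (Fin n)) 1,
      ⟪radialFn K u • u, w⟫ = supportFn K w → w = v) :
    Tendsto
      (fun t : ℝ =>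
        (radialFn (wulff n (fun w => (supportFn K w ^ p + t * f w ^ p) ^ (1 / p))) u
          - radialFn K u) / t)
      (𝓝[≠] 0)
      (𝓝 (f v ^ p * radialFn K u / (p * supportFn K v ^ p))) := by
  have hKne : K.Nonempty := ⟨0, interior_subset hKo⟩
  set h : EuclideanSpace ℝ (Fin n) → ℝ := supportFn K with hh
  set r : ℝ := radialFn K u with hrdef
  -- norms on the sphere
  have hnu : ‖u‖ = 1 := by simpa using hu
  have hnv : ‖v‖ = 1 := by simpa using hv
  -- bound R for K
  obtain ⟨R, hKR⟩ := hK.isBounded.subset_closedBall 0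
  have hRK : ∀ y ∈ K, ‖y‖ ≤ R := fun y hy => by simpa using hKR hy
  -- inner ball
  obtain ⟨ρ, hρ0, hρK⟩ : ∃ ρ > 0, ball (0 : EuclideanSpace ℝ (Fin n)) ρ ⊆ K := by
    rcases Metric.mem_nhds_iff.mp (mem_interior_iff_mem_nhds.mp hKo) with ⟨ρ, hρ0, hρ⟩
    exact ⟨ρ, hρ0, hρ⟩
  set m : ℝ := ρ / 2 with hm
  have hm0 : 0 < m := by positivity
  -- support function bounds
  have hhlow : ∀ w ∈ sphere (0 : EuclideanSpace ℝ (Fin n)) 1, m ≤ h w := by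
    intro w hw
    have hnw : ‖w‖ = 1 := by simpa using hw
    have hmem : m • w ∈ K := by
      apply hρK
      simp [mem_ball, dist_zero_right, norm_smul, hnw, abs_of_pos hm0]
      linarith
    have := le_supportFn hK hmem w
    rwa [real_inner_smul_left, real_inner_self_eq_norm_sq, hnw, one_pow, mul_one] at this
  have hhup : ∀ w ∈ sphere (0 : EuclideanSpace ℝ (Fin n)) 1, h w ≤ R := by
    intro w hw
    have hnw : ‖w‖ = 1 := by simpa using hw
    refine supportFn_le hKne fun y hy => ?_
    calc ⟪y, w⟫ ≤ ‖y‖ * ‖w‖ := real_inner_le_norm _ _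
      _ ≤ R := by rw [hnw, mul_one]; exact hRK y hy
  have hmR : m ≤ R := le_trans (hhlow u hu) (hhup u hu)
  have hhcont : Continuous h := supportFn_continuous hK hKne hRK
  -- radial function of K
  have hSbdd : BddAbove {l : ℝ | 0 ≤ l ∧ l • u ∈ K} := by
    refine ⟨R, fun l hl => ?_⟩
    have := hRK _ hl.2
    rwa [norm_smul, hnu, mul_one, Real.norm_eq_abs, abs_of_nonneg hl.1] at this
  have hSne : (0:ℝ) ∈ {l : ℝ | 0 ≤ l ∧ l • u ∈ K} :=
    ⟨le_refl 0, by rw [zero_smul]; exact interior_subset hKo⟩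
  have hSclosed : IsClosed {l : ℝ | 0 ≤ l ∧ l • u ∈ K} := by
    have : {l : ℝ | 0 ≤ l ∧ l • u ∈ K} = Ici 0 ∩ (fun l : ℝ => l • u) ⁻¹' K := by
      ext l; exact Iff.rfl
    rw [this]
    exact isClosed_Ici.inter (hK.isClosed.preimage (continuous_id.smul continuous_const))
  have hrmem : 0 ≤ r ∧ r • u ∈ K := hSclosed.csSup_mem ⟨0, hSne⟩ hSbdd
  have hrpos : 0 < r := by
    have hmm : m ∈ {l : ℝ | 0 ≤ l ∧ l • u ∈ K} := by
      refine ⟨hm0.le, hρK ?_⟩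
      simp [mem_ball, dist_zero_right, norm_smul, hnu, abs_of_pos hm0]
      linarith
    exact lt_of_lt_of_le hm0 (le_csSup hSbdd hmm)
  have hrh : ∀ w, r * ⟪u, w⟫ ≤ h w := by
    intro w
    have := le_supportFn hK hrmem.2 w
    rwa [real_inner_smul_left] at this
  -- the contact direction
  set c' : ℝ := ⟪u, v⟫ with hc'def
  have hrc : r * c' = h v := by
    rw [hc'def, ← real_inner_smul_left]; exact hvK
  have hc'pos : 0 < c' := by
    have := hhlow v hv
    nlinarith
  -- exponents and expansion
  set q : ℝ := 1 / p with hqdef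
  have hq0 : 0 < q := by positivity
  set L : ℝ := f v ^ p * r / (p * h v ^ p) with hLdef
  set F : EuclideanSpace ℝ (Fin n) → ℝ :=
    fun w => q * (h w ^ p) ^ (q - 1) * f w ^ p with hFdef
  have hfp : ∀ w ∈ sphere (0 : EuclideanSpace ℝ (Fin n)) 1, 0 < f w ^ p :=
    fun w hw => Real.rpow_pos_of_pos (hfpos w hw) p
  -- bound for f ^ p on the sphere
  have hfpc : ContinuousOn (fun w => f w ^ p) (sphere (0 : EuclideanSpace ℝ (Fin n)) 1) :=
    hf.rpow_const fun w hw => Or.inl (hfpos w hw).ne'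
  obtain ⟨b₁, hb₁⟩ := (isCompact_sphere (0 : EuclideanSpace ℝ (Fin n)) 1).exists_bound_of_continuousOn hfpc
  have hb : ∀ w ∈ sphere (0 : EuclideanSpace ℝ (Fin n)) 1, f w ^ p ≤ b₁ :=
    fun w hw => le_trans (le_abs_self _) (hb₁ w hw)
  have hb₁pos : 0 < b₁ := lt_of_lt_of_le (hfp u hu) (hb u hu)
  -- bounds for h ^ p on the sphere
  set a₀ : ℝ := m ^ p with ha₀def
  set a₁ : ℝ := R ^ p with ha₁def
  have ha₀ : 0 < a₀ := Real.rpow_pos_of_pos hm0 p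
  have ha : ∀ w ∈ sphere (0 : EuclideanSpace ℝ (Fin n)) 1, a₀ ≤ h w ^ p ∧ h w ^ p ≤ a₁ :=
    fun w hw => ⟨Real.rpow_le_rpow hm0.le (hhlow w hw) hp.le,
      Real.rpow_le_rpow (le_trans hm0.le (hhlow w hw)) (hhup w hw) hp.le⟩
  set lo : ℝ := a₀ / 2 with hlodef
  set hi : ℝ := a₁ + a₀ with hhidef
  have hlo0 : 0 < lo := by positivity
  obtain ⟨C, hC, hquad⟩ := rpow_quad q lo hi hlo0
  set δ₁ : ℝ := a₀ / (2 * b₁) with hδ₁def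
  have hδ₁pos : 0 < δ₁ := by positivity
  set C₂ : ℝ := C * b₁ ^ 2 + 1 with hC₂def
  have hC₂pos : 0 < C₂ := by positivity
  have hbase : ∀ t : ℝ, |t| ≤ δ₁ → ∀ w ∈ sphere (0 : EuclideanSpace ℝ (Fin n)) 1,
      h w ^ p + t * f w ^ p ∈ Icc lo hi := by
    intro t ht w hw
    have h1 := (ha w hw).1
    have h2 := (ha w hw).2
    have h3 : |t * f w ^ p| ≤ a₀ / 2 := by
      rw [abs_mul, abs_of_pos (hfp w hw)]
      calc |t| * f w ^ p ≤ δ₁ * b₁ :=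
        mul_le_mul ht (hb w hw) (hfp w hw).le hδ₁pos.le
        _ = a₀ / 2 := by rw [hδ₁def]; field_simp
    rw [abs_le] at h3
    have h4 : a₀ ≤ a₁ := le_trans h1 h2
    constructor
    · rw [hlodef]; linarith
    · rw [hhidef]; linarith
  have hxmem : ∀ w ∈ sphere (0 : EuclideanSpace ℝ (Fin n)) 1, h w ^ p ∈ Icc lo hi := by
    intro w hw
    have := hbase 0 (by simpa using hδ₁pos.le) w hw
    simpa using this
  have hgqh : ∀ w ∈ sphere (0 : EuclideanSpace ℝ (Fin n)) 1, (h w ^ p) ^ q = h w := by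
    intro w hw
    have hw0 : (0:ℝ) < h w := lt_of_lt_of_le hm0 (hhlow w hw)
    rw [hqdef, ← Real.rpow_mul hw0.le, mul_one_div_cancel hp.ne', Real.rpow_one]
  have hkey : ∀ t : ℝ, |t| ≤ δ₁ → ∀ w ∈ sphere (0 : EuclideanSpace ℝ (Fin n)) 1,
      |(h w ^ p + t * f w ^ p) ^ q - h w - t * F w| ≤ C₂ * t ^ 2 := by
    intro t ht w hw
    have h1 := hquad (h w ^ p) (hxmem w hw) (t * f w ^ p) (hbase t ht w hw)
    have h2 := hgqh w hw
    have h3 : (h w ^ p + t * f w ^ p) ^ q - h w - t * F w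
        = (h w ^ p + t * f w ^ p) ^ q - (h w ^ p) ^ q - q * (h w ^ p) ^ (q - 1) * (t * f w ^ p) := by
      simp only [hFdef]; rw [h2]; ring
    rw [h3]
    calc |(h w ^ p + t * f w ^ p) ^ q - (h w ^ p) ^ q - q * (h w ^ p) ^ (q - 1) * (t * f w ^ p)|
        ≤ C * (t * f w ^ p) ^ 2 := h1
      _ ≤ C₂ * t ^ 2 := by
        rw [hC₂def, mul_pow]
        have h5 : (f w ^ p) ^ 2 ≤ b₁ ^ 2 := by
          have := hfp w hw; have := hb w hw; nlinarith
        have h6 : C * t ^ 2 * (f w ^ p) ^ 2 ≤ C * t ^ 2 * b₁ ^ 2 :=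
          mul_le_mul_of_nonneg_left h5 (by positivity)
        nlinarith [sq_nonneg t]
  have hgpos : ∀ t : ℝ, |t| ≤ δ₁ → ∀ w ∈ sphere (0 : EuclideanSpace ℝ (Fin n)) 1,
      0 < (h w ^ p + t * f w ^ p) ^ q :=
    fun t ht w hw => Real.rpow_pos_of_pos (lt_of_lt_of_le hlo0 (hbase t ht w hw).1) q
  have hhv0 : 0 < h v := lt_of_lt_of_le hm0 (hhlow v hv)
  have hhvp0 : 0 < h v ^ p := Real.rpow_pos_of_pos hhv0 p
  have hFL : F v = L * c' := by
    simp only [hFdef]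
    rw [hLdef]
    have h1 : (h v ^ p) ^ (q - 1) = h v ^ (1 - p) := by
      rw [← Real.rpow_mul hhv0.le]
      congr 1
      rw [hqdef]; field_simp
    have h2 : h v ^ (1 - p) = h v / h v ^ p := by
      rw [Real.rpow_sub hhv0, Real.rpow_one]
    have hc'v : c' = h v / r := by rw [← hrc]; field_simp
    rw [h1, h2, hqdef, hc'v]
    field_simp
  have hFcont : ContinuousOn F (sphere (0 : EuclideanSpace ℝ (Fin n)) 1) := by
    have hA : ContinuousOn (fun w => (h w ^ p) ^ (q - 1))
        (sphere (0 : EuclideanSpace ℝ (Fin n)) 1) := by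
      refine ContinuousOn.rpow_const ?_ fun w hw => Or.inl ?_
      · exact ContinuousOn.rpow_const hhcont.continuousOn fun w hw =>
          Or.inl (ne_of_gt (lt_of_lt_of_le hm0 (hhlow w hw)))
      · exact ne_of_gt (Real.rpow_pos_of_pos (lt_of_lt_of_le hm0 (hhlow w hw)) p)
    simp only [hFdef]
    exact (continuousOn_const.mul hA).mul hfpc
  obtain ⟨CF, hCF⟩ := (isCompact_sphere (0 : EuclideanSpace ℝ (Fin n)) 1).exists_bound_of_continuousOn hFcont
  have hFb : ∀ w ∈ sphere (0 : EuclideanSpace ℝ (Fin n)) 1, |F w| ≤ CF := by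
    intro w hw; have := hCF w hw; rwa [Real.norm_eq_abs] at this
  have hCF0 : 0 ≤ CF := le_trans (abs_nonneg _) (hFb u hu)
  set D : EuclideanSpace ℝ (Fin n) → ℝ := fun w => h w - r * ⟪u, w⟫ with hDdef
  have hDcont : Continuous D := by
    apply hhcont.sub
    exact continuous_const.mul (continuous_const.inner continuous_id)
  have hD0 : ∀ w, 0 ≤ D w := fun w => by simp only [hDdef]; linarith [hrh w]
  have hDvv : ∀ w ∈ sphere (0 : EuclideanSpace ℝ (Fin n)) 1, D w = 0 → w = v := by
    intro w hw hDw
    apply hvuniq w hw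
    rw [real_inner_smul_left]
    simp only [hDdef] at hDw; linarith
  set G : EuclideanSpace ℝ (Fin n) → ℝ := fun w => L * ⟪u, w⟫ - F w with hGdef
  have hGcont : ContinuousOn G (sphere (0 : EuclideanSpace ℝ (Fin n)) 1) := by
    apply ContinuousOn.sub _ hFcont
    exact (continuous_const.mul (continuous_const.inner continuous_id)).continuousOn
  have hGv : G v = 0 := by
    simp only [hGdef]
    rw [hFL, hc'def]
    ring
  clear_value q L F D G C₂ c' r h m a₀ a₁
  -- main quantitative estimate
  have main : ∀ e : ℝ, 0 < e → ∃ δ > 0, ∀ t : ℝ, |t| < δ →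
      |radialFn (wulff n fun w => (h w ^ p + t * f w ^ p) ^ q) u - r - t * L| ≤ e * |t| := by
    intro e he
    -- neighborhood of v where G is small and ⟪u,·⟫ is large
    obtain ⟨s₁, hs₁pos, hs₁⟩ := Metric.continuousWithinAt_iff.mp (hGcont v hv) (e * c' / 4)
      (by positivity)
    obtain ⟨s₂, hs₂pos, hs₂⟩ := Metric.continuousWithinAt_iff.mp
      ((continuous_const.inner continuous_id :
        Continuous fun w : EuclideanSpace ℝ (Fin n) => ⟪u, w⟫).continuousWithinAt
        (s := sphere 0 1) (x := v)) (c' / 2) (by positivity)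
    set s₀ : ℝ := min s₁ s₂ with hs₀def
    have hs₀pos : 0 < s₀ := lt_min hs₁pos hs₂pos
    have hnear : ∀ w ∈ sphere (0 : EuclideanSpace ℝ (Fin n)) 1, dist w v < s₀ →
        |G w| ≤ e * c' / 4 ∧ c' / 2 ≤ ⟪u, w⟫ := by
      intro w hw hdw
      constructor
      · have := hs₁ hw (lt_of_lt_of_le hdw (min_le_left _ _))
        rw [Real.dist_eq, hGv, sub_zero] at this
        exact this.le
      · have := hs₂ hw (lt_of_lt_of_le hdw (min_le_right _ _))
        rw [Real.dist_eq, ← hc'def] at this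
        rw [abs_lt] at this
        linarith [this.1]
    -- positive gap away from v
    obtain ⟨d, hd0, hd⟩ : ∃ d > 0, ∀ w ∈ sphere (0 : EuclideanSpace ℝ (Fin n)) 1,
        s₀ ≤ dist w v → d ≤ D w := by
      by_cases hTne : (sphere (0 : EuclideanSpace ℝ (Fin n)) 1 ∩ {w | s₀ ≤ dist w v}).Nonempty
      · have hTcomp : IsCompact (sphere (0 : EuclideanSpace ℝ (Fin n)) 1 ∩ {w | s₀ ≤ dist w v}) :=
          (isCompact_sphere 0 1).inter_right
            (isClosed_le continuous_const (continuous_id.dist continuous_const))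
        obtain ⟨w₀, hw₀T, hw₀min⟩ := hTcomp.exists_isMinOn hTne hDcont.continuousOn
        refine ⟨D w₀, ?_, fun w hw hsw => hw₀min ⟨hw, hsw⟩⟩
        rcases (hD0 w₀).lt_or_eq with hlt | heq
        · exact hlt
        · exfalso
          have hw₀v : w₀ = v := hDvv w₀ hw₀T.1 heq.symm
          have : s₀ ≤ dist w₀ v := hw₀T.2
          rw [hw₀v, dist_self] at this
          linarith
      · exact ⟨1, one_pos, fun w hw hsw => absurd ⟨w, hw, hsw⟩ hTne⟩
    set K₀ : ℝ := |L| + e + CF + 1 with hK₀def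
    have hK₀pos : 0 < K₀ := by rw [hK₀def]; positivity
    clear_value K₀
    refine ⟨min 1 (min δ₁ (min (r / (2 * K₀)) (min (e * c' / (4 * C₂))
      (min (d / (2 * K₀)) (min (d / (2 * C₂)) (e * c' / C₂)))))), by positivity, fun t ht => ?_⟩
    simp only [lt_min_iff] at ht
    obtain ⟨ht1, htδ₁, htA, htB, htC, htD, htE⟩ := ht
    have ht1 : |t| ≤ 1 := ht1.le
    have htδ₁ : |t| ≤ δ₁ := htδ₁.le
    have ht2 : |t| * K₀ ≤ r / 2 := by
      rw [lt_div_iff₀ (by positivity)] at htA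
      have hid : |t| * (2 * K₀) = 2 * (|t| * K₀) := by ring
      linarith [htA, hid]
    have ht3 : C₂ * |t| ≤ e * c' / 4 := by
      rw [lt_div_iff₀ (by positivity)] at htB
      have hid : |t| * (4 * C₂) = 4 * (C₂ * |t|) := by ring
      linarith [htB, hid]
    have ht4 : |t| * K₀ ≤ d / 2 := by
      rw [lt_div_iff₀ (by positivity)] at htC
      have hid : |t| * (2 * K₀) = 2 * (|t| * K₀) := by ring
      linarith [htC, hid]
    have ht5 : C₂ * |t| ≤ d / 2 := by
      rw [lt_div_iff₀ (by positivity)] at htD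
      have hid : |t| * (2 * C₂) = 2 * (C₂ * |t|) := by ring
      linarith [htD, hid]
    have ht6 : C₂ * |t| ≤ e * c' := by
      rw [lt_div_iff₀ (by positivity)] at htE
      have hid : |t| * C₂ = C₂ * |t| := by ring
      linarith [htE, hid]
    have ht2eq : t ^ 2 = |t| * |t| := by rw [abs_mul_abs_self]; ring
    have habt : 0 ≤ |t| := abs_nonneg t
    -- upper bound
    have hgtv : (h v ^ p + t * f v ^ p) ^ q ≤ h v + t * F v + C₂ * t ^ 2 := by
      have := hkey t htδ₁ v hv
      rw [abs_le] at this
      linarith [this.2]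
    have hStne : (0:ℝ) ∈ {l : ℝ | 0 ≤ l ∧
        l • u ∈ wulff n fun w => (h w ^ p + t * f w ^ p) ^ q} := by
      refine ⟨le_refl 0, ?_⟩
      rw [zero_smul, mem_wulff]
      intro w hw
      rw [inner_zero_left]
      exact (hgpos t htδ₁ w hw).le
    have hStbdd : BddAbove {l : ℝ | 0 ≤ l ∧
        l • u ∈ wulff n fun w => (h w ^ p + t * f w ^ p) ^ q} := by
      refine ⟨(h u ^ p + t * f u ^ p) ^ q, fun l hl => ?_⟩
      have := (mem_wulff.mp hl.2) u hu
      rwa [real_inner_smul_left, real_inner_self_eq_norm_sq, hnu, one_pow, mul_one] at this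
    have hρt_eq : radialFn (wulff n fun w => (h w ^ p + t * f w ^ p) ^ q) u
        = sSup {l : ℝ | 0 ≤ l ∧ l • u ∈ wulff n fun w => (h w ^ p + t * f w ^ p) ^ q} := rfl
    have hup : radialFn (wulff n fun w => (h w ^ p + t * f w ^ p) ^ q) u ≤ r + t * L + e * |t| := by
      rw [hρt_eq]
      refine csSup_le ⟨0, hStne⟩ fun l hl => ?_
      have h2 := (mem_wulff.mp hl.2) v hv
      rw [real_inner_smul_left, ← hc'def] at h2
      have h4 : C₂ * t ^ 2 ≤ e * c' * |t| := by
        rw [ht2eq, ← mul_assoc]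
        exact mul_le_mul_of_nonneg_right ht6 habt
      have h5 : h v = r * c' := hrc.symm
      rw [hFL] at hgtv
      have hid : (r + t * L + e * |t|) * c' = r * c' + t * (L * c') + e * c' * |t| := by ring
      have h6 : l * c' ≤ (r + t * L + e * |t|) * c' := by linarith [h2, hgtv, h4, h5, hid]
      exact le_of_mul_le_mul_right h6 hc'pos
    -- lower bound
    set lt : ℝ := r + t * L - e * |t| with hltdef
    clear_value lt
    have hlt0 : 0 ≤ lt := by
      have h1 : t * L ≤ |t| * |L| := by
        calc t * L ≤ |t * L| := le_abs_self _
          _ = |t| * |L| := abs_mul _ _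
      have h2 : |t| * |L| + e * |t| ≤ |t| * K₀ := by
        have hid : |t| * K₀ = |t| * |L| + e * |t| + |t| * CF + |t| := by rw [hK₀def]; ring
        linarith [hid, mul_nonneg habt hCF0, habt]
      have h3 : -(t * L) ≤ |t| * |L| := by
        calc -(t * L) ≤ |t * L| := neg_le_abs _
          _ = |t| * |L| := abs_mul _ _
      rw [hltdef]
      linarith [h3, h2, ht2, hrpos]
    have hmemlt : lt • u ∈ wulff n fun w => (h w ^ p + t * f w ^ p) ^ q := by
      rw [mem_wulff]
      intro w hw
      rw [real_inner_smul_left]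
      show lt * ⟪u, w⟫ ≤ (h w ^ p + t * f w ^ p) ^ q
      have hgw_lb : h w + t * F w - C₂ * t ^ 2 ≤ (h w ^ p + t * f w ^ p) ^ q := by
        have := hkey t htδ₁ w hw
        rw [abs_le] at this
        linarith [this.1]
      have hexp : lt * ⟪u, w⟫ = r * ⟪u, w⟫ + t * L * ⟪u, w⟫ - e * |t| * ⟪u, w⟫ := by
        rw [hltdef]; ring
      rcases le_or_gt ⟪u, w⟫ 0 with hw0 | hw0
      · exact le_trans (mul_nonpos_of_nonneg_of_nonpos hlt0 hw0) (hgpos t htδ₁ w hw).le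
      rcases lt_or_ge (dist w v) s₀ with hn | hfar
      · obtain ⟨hGw, hiw⟩ := hnear w hw hn
        have hA : t * L * ⟪u, w⟫ - t * F w ≤ |t| * (e * c' / 4) := by
          have h1 : t * G w ≤ |t| * |G w| := by
            calc t * G w ≤ |t * G w| := le_abs_self _
              _ = |t| * |G w| := abs_mul _ _
          have h2 : |t| * |G w| ≤ |t| * (e * c' / 4) :=
            mul_le_mul_of_nonneg_left hGw habt
          have h3 : t * G w = t * L * ⟪u, w⟫ - t * F w := by
            simp only [hGdef]; ring
          linarith
        have hB : e * |t| * (c' / 2) ≤ e * |t| * ⟪u, w⟫ :=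
          mul_le_mul_of_nonneg_left hiw (by positivity)
        have hCq : C₂ * t ^ 2 ≤ e * c' / 4 * |t| := by
          rw [ht2eq, ← mul_assoc]
          exact mul_le_mul_of_nonneg_right ht3 habt
        have hDw := hD0 w
        simp only [hDdef] at hDw
        linarith [hexp, hgw_lb]
      · have hdw := hd w hw hfar
        simp only [hDdef] at hdw
        have hnw : ‖w‖ = 1 := by simpa using hw
        have hiw1 : |⟪u, w⟫| ≤ 1 := by
          have := abs_real_inner_le_norm u w
          rwa [hnu, hnw, one_mul] at this
        have hA : t * L * ⟪u, w⟫ ≤ |t| * |L| := by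
          calc t * L * ⟪u, w⟫ ≤ |t * L * ⟪u, w⟫| := le_abs_self _
            _ = |t| * |L| * |⟪u, w⟫| := by rw [abs_mul, abs_mul]
            _ ≤ |t| * |L| * 1 := mul_le_mul_of_nonneg_left hiw1 (by positivity)
            _ = |t| * |L| := mul_one _
        have hB : -(t * F w) ≤ |t| * CF := by
          calc -(t * F w) ≤ |t * F w| := neg_le_abs _
            _ = |t| * |F w| := abs_mul _ _
            _ ≤ |t| * CF := mul_le_mul_of_nonneg_left (hFb w hw) habt
        have hC' : 0 ≤ e * |t| * ⟪u, w⟫ := by positivity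
        have hCq : C₂ * t ^ 2 ≤ d / 2 := by
          rw [ht2eq, ← mul_assoc]
          calc C₂ * |t| * |t| ≤ C₂ * |t| * 1 := mul_le_mul_of_nonneg_left ht1 (by positivity)
            _ ≤ d / 2 := by rw [mul_one]; exact ht5
        have hK₀' : |t| * |L| + |t| * CF ≤ d / 2 := by
          have hid : |t| * K₀ = |t| * |L| + |t| * e + |t| * CF + |t| := by rw [hK₀def]; ring
          linarith [hid, mul_nonneg habt he.le, habt, ht4]
        linarith [hexp, hgw_lb]
    have hlow : lt ≤ radialFn (wulff n fun w => (h w ^ p + t * f w ^ p) ^ q) u := by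
      rw [hρt_eq]
      exact le_csSup hStbdd ⟨hlt0, hmemlt⟩
    rw [abs_le]
    constructor
    · rw [hltdef] at hlow; linarith
    · linarith
  -- conclusion
  rw [Metric.tendsto_nhdsWithin_nhds]
  intro ε hε
  obtain ⟨δ, hδ, hmain⟩ := main (ε / 2) (by positivity)
  refine ⟨δ, hδ, ?_⟩
  intro t ht htd
  rw [Real.dist_eq, sub_zero] at htd
  have ht0 : t ≠ 0 := by simpa using ht
  have h1 := hmain t htd
  rw [Real.dist_eq]
  have habs : 0 < |t| := abs_pos.mpr ht0
  have h2 : (radialFn (wulff n fun w => (h w ^ p + t * f w ^ p) ^ q) u - r) / t - L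
      = (radialFn (wulff n fun w => (h w ^ p + t * f w ^ p) ^ q) u - r - t * L) / t := by
    field_simp
  rw [h2, abs_div, div_lt_iff₀ habs]
  calc |radialFn (wulff n fun w => (h w ^ p + t * f w ^ p) ^ q) u - r - t * L|
      ≤ ε / 2 * |t| := h1
    _ < ε * |t| := by
        have hhalf : ε / 2 < ε := by linarith
        exact mul_lt_mul_of_pos_right hhalf habs
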